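/- Let f : [0,T) → ℝ be a maximal solution of the ODE f'' = Ξ(f', f) with f(0) = 1 and f'(0) = 1, where Ξ : ℝ × ℝ → ℝ satisfies Ξ(x,y) ≥ ε x^a y^b for all x ≥ 1, y ≥ 1, with constants ε > 0 and nonnegative integers a, b satisfying 2a + b ≥ 3. Then T < ∞. -/

import Mathlib

/-- `f` solves the ODE `f'' = Ξ(f', f)` on the interval `[0, T)` (with `T : EReal`
possibly infinite), being twice differentiable there. -/
def SolvesODE (Ξ : ℝ → ℝ → ℝ) (f : ℝ → ℝ) (T : EReal) : Prop :=
  ∀ t : ℝ, 0 ≤ t → (t : EReal) < T →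
    DifferentiableAt ℝ f t ∧ DifferentiableAt ℝ (deriv f) t ∧
      deriv (deriv f) t = Ξ (deriv f t) (f t)

private lemma slope_lb (u : ℝ → ℝ) (s t m : ℝ) (hst : s ≤ t)
    (hdiff : ∀ x ∈ Set.Icc s t, DifferentiableAt ℝ u x)
    (hder : ∀ x ∈ Set.Ioo s t, m ≤ deriv u x) :
    u s + m * (t - s) ≤ u t := by
  have hwd : ∀ x ∈ Set.Icc s t, DifferentiableAt ℝ (fun y => u y - m * y) x := by
    intro x hx
    exact (hdiff x hx).sub ((differentiable_id.const_mul m) x)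
  have hmono : MonotoneOn (fun y => u y - m * y) (Set.Icc s t) := by
    apply monotoneOn_of_deriv_nonneg (convex_Icc s t)
    · exact fun x hx => (hwd x hx).continuousAt.continuousWithinAt
    · intro x hx
      rw [interior_Icc] at hx
      exact (hwd x (Set.Ioo_subset_Icc_self hx)).differentiableWithinAt
    · intro x hx
      rw [interior_Icc] at hx
      have hm : HasDerivAt (fun y : ℝ => m * y) m x := by
        simpa using (hasDerivAt_id x).const_mul m
      rw [((hdiff x (Set.Ioo_subset_Icc_self hx)).hasDerivAt.fun_sub hm).deriv]
      have := hder x hx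
      linarith
  have h := hmono (Set.left_mem_Icc.2 hst) (Set.right_mem_Icc.2 hst) hst
  simp only at h
  linarith

theorem stmt_0 (Ξ : ℝ → ℝ → ℝ) (hΞcont : Continuous fun p : ℝ × ℝ => Ξ p.1 p.2)
    (ε : ℝ) (hε : 0 < ε) (a b : ℕ) (hab : 3 ≤ 2 * a + b)
    (hlb : ∀ x y : ℝ, 1 ≤ x → 1 ≤ y → ε * x ^ a * y ^ b ≤ Ξ x y)
    (T : EReal) (hT : 0 < T) (f : ℝ → ℝ)
    (hf0 : f 0 = 1) (hf'0 : deriv f 0 = 1)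
    (hsol : SolvesODE Ξ f T)
    (hmax : ¬ ∃ (T' : EReal) (g : ℝ → ℝ), T < T' ∧
        (∀ t : ℝ, 0 ≤ t → (t : EReal) < T → g t = f t) ∧ SolvesODE Ξ g T') :
    T < ⊤ := by
  by_contra hcon
  have hTtop : T = ⊤ := top_unique (not_lt.mp hcon)
  have hsol' : ∀ t : ℝ, 0 ≤ t → DifferentiableAt ℝ f t ∧ DifferentiableAt ℝ (deriv f) t ∧
      deriv (deriv f) t = Ξ (deriv f t) (f t) := fun t ht =>
    hsol t ht (hTtop ▸ EReal.coe_lt_top t)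
  have hfd : ∀ t, 0 ≤ t → DifferentiableAt ℝ f t := fun t ht => (hsol' t ht).1
  have hφd : ∀ t, 0 ≤ t → DifferentiableAt ℝ (deriv f) t := fun t ht => (hsol' t ht).2.1
  have hode : ∀ t, 0 ≤ t → deriv (deriv f) t = Ξ (deriv f t) (f t) :=
    fun t ht => (hsol' t ht).2.2
  -- Step 1 : the derivative stays ≥ 1
  have hφ1 : ∀ t, 0 ≤ t → 1 ≤ deriv f t := by
    by_contra hbad
    push_neg at hbad
    obtain ⟨t₁, ht₁0, ht₁⟩ := hbad
    set B : Set ℝ := {t | 0 < t ∧ deriv f t < 1} with hB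
    have hBne : B.Nonempty := by
      refine ⟨t₁, ?_, ht₁⟩
      rcases ht₁0.lt_or_eq with h | h
      · exact h
      · exfalso; rw [← h, hf'0] at ht₁; exact absurd ht₁ (lt_irrefl 1)
    have hBbdd : BddBelow B := ⟨0, fun c hc => hc.1.le⟩
    set τ := sInf B with hτdef
    have hτ0 : 0 ≤ τ := le_csInf hBne fun c hc => hc.1.le
    have hτcl : τ ∈ closure B := csInf_mem_closure hBne hBbdd
    have hφτ : deriv f τ ≤ 1 := by
      have hc : ContinuousWithinAt (deriv f) B τ :=
        (hφd τ hτ0).continuousAt.continuousWithinAt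
      have h1 : deriv f τ ∈ closure (deriv f '' B) := hc.mem_closure_image hτcl
      have h2 : closure (deriv f '' B) ⊆ Set.Iic 1 := closure_minimal
        (by rintro y ⟨x, hx, rfl⟩; exact hx.2.le) isClosed_Iic
      exact h2 h1
    have hgood : ∀ s, 0 ≤ s → s < τ → 1 ≤ deriv f s := by
      intro s hs0 hsτ
      rcases hs0.lt_or_eq with h | h
      · by_contra hlt
        exact absurd (csInf_le hBbdd ⟨h, not_le.mp hlt⟩) (not_le.mpr hsτ)
      · rw [← h, hf'0]
    rcases hτ0.lt_or_eq with hτpos | hτeq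
    · -- τ > 0 : deriv f grows strictly on [0,τ], contradiction with deriv f τ ≤ 1
      have hf1' : ∀ s, 0 ≤ s → s ≤ τ → 1 ≤ f s := by
        intro s hs0 hsτ
        have h := slope_lb f 0 s 1 hs0 (fun x hx => hfd x hx.1)
          (fun x hx => hgood x hx.1.le (lt_of_lt_of_le hx.2 hsτ))
        rw [hf0] at h
        nlinarith
      have hder : ∀ x ∈ Set.Ioo 0 τ, ε ≤ deriv (deriv f) x := by
        intro x hx
        rw [hode x hx.1.le]
        have h1 : 1 ≤ deriv f x := hgood x hx.1.le hx.2
        have h2 : 1 ≤ f x := hf1' x hx.1.le hx.2.le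
        have h3 := hlb (deriv f x) (f x) h1 h2
        have h4 : 1 ≤ deriv f x ^ a := one_le_pow₀ h1
        have h5 : 1 ≤ f x ^ b := one_le_pow₀ h2
        have h6 : ε * 1 * 1 ≤ ε * deriv f x ^ a * f x ^ b :=
          mul_le_mul (mul_le_mul_of_nonneg_left h4 hε.le) h5 zero_le_one
            (mul_nonneg hε.le (zero_le_one.trans h4))
        linarith
      have hkey := slope_lb (deriv f) 0 τ ε hτpos.le (fun x hx => hφd x hx.1) hder
      rw [hf'0] at hkey
      nlinarith [mul_pos hε hτpos]
    · -- τ = 0 : the derivative of (deriv f) at 0 is positive, so deriv f > 1 just after 0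
      have hD : HasDerivAt (deriv f) (Ξ 1 1) 0 := by
        have h := (hφd 0 le_rfl).hasDerivAt
        rwa [hode 0 le_rfl, hf'0, hf0] at h
      have hΞpos : (0:ℝ) < Ξ 1 1 := lt_of_lt_of_le hε (by simpa using hlb 1 1 le_rfl le_rfl)
      have hev : ∀ᶠ x in nhdsWithin (0:ℝ) {(0:ℝ)}ᶜ, 0 < slope (deriv f) 0 x :=
        (hasDerivAt_iff_tendsto_slope.mp hD).eventually (eventually_gt_nhds hΞpos)
      have hev' : ∀ᶠ x in nhdsWithin (0:ℝ) (Set.Ioi 0), 0 < slope (deriv f) 0 x :=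
        hev.filter_mono (nhdsWithin_mono 0
          (fun x hx => Set.mem_compl_singleton_iff.mpr (ne_of_gt hx)))
      obtain ⟨v, hv, hvs⟩ := hev'.exists_mem
      obtain ⟨w, hw, hwv⟩ := mem_nhdsGT_iff_exists_Ioo_subset.mp hv
      obtain ⟨c, hcB, hcw⟩ := exists_lt_of_csInf_lt hBne
        (show sInf B < w by rw [← hτdef, ← hτeq]; exact hw)
      have hc0 : 0 < c := hcB.1
      have hs := hvs c (hwv ⟨hc0, hcw⟩)
      rw [slope_def_field] at hs
      rw [hf'0, sub_zero] at hs
      have h2 : 0 < deriv f c - 1 := by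
        have := mul_pos hs hc0
        rwa [div_mul_cancel₀ _ (ne_of_gt hc0)] at this
      linarith [hcB.2]
  -- Step 2 : f t ≥ 1 + t
  have hf1 : ∀ t, 0 ≤ t → 1 + t ≤ f t := by
    intro t ht
    have h := slope_lb f 0 t 1 ht (fun x hx => hfd x hx.1) (fun x hx => hφ1 x hx.1.le)
    rw [hf0] at h
    linarith
  have hfge : ∀ t, 0 ≤ t → 1 ≤ f t := fun t ht => by linarith [hf1 t ht]
  have hode' : ∀ t, 0 ≤ t → ε * deriv f t ^ a * f t ^ b ≤ deriv (deriv f) t := by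
    intro t ht
    rw [hode t ht]
    exact hlb _ _ (hφ1 t ht) (hfge t ht)
  -- Common blow-up machinery
  have key : ∀ (g : ℝ → ℝ) (c t₀ : ℝ), 0 < c → 0 ≤ t₀ →
      (∀ t, t₀ ≤ t → DifferentiableAt ℝ g t ∧ 1 ≤ g t ∧ c * g t ^ 2 ≤ deriv g t) → False := by
    intro g c t₀ hc ht₀ hg
    obtain ⟨t₂, ht₂⟩ : ∃ x : ℝ, x = t₀ + 2 / c := ⟨_, rfl⟩
    have h2c : (0:ℝ) < 2 / c := by positivity
    have ht₀₂ : t₀ ≤ t₂ := by rw [ht₂]; linarith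
    have hψd : ∀ x ∈ Set.Icc t₀ t₂, DifferentiableAt ℝ (fun y => -(g y)⁻¹) x := by
      intro x hx
      obtain ⟨hd, hg1, -⟩ := hg x hx.1
      exact (hd.inv (one_pos.trans_le hg1).ne').neg
    have hder : ∀ x ∈ Set.Ioo t₀ t₂, c ≤ deriv (fun y => -(g y)⁻¹) x := by
      intro x hx
      obtain ⟨hd, hg1, hcg⟩ := hg x hx.1.le
      have hgx : (0:ℝ) < g x := one_pos.trans_le hg1
      have hcalc : deriv (fun y => -(g y)⁻¹) x = deriv g x / g x ^ 2 := by
        rw [deriv.fun_neg, deriv_fun_inv'' hd hgx.ne']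
        ring
      rw [hcalc, le_div_iff₀ (by positivity)]
      exact hcg
    have h := slope_lb (fun y => -(g y)⁻¹) t₀ t₂ c ht₀₂ hψd hder
    have h' : -(g t₀)⁻¹ + c * (t₂ - t₀) ≤ -(g t₂)⁻¹ := h
    obtain ⟨-, hg1, -⟩ := hg t₀ le_rfl
    obtain ⟨-, hg2, -⟩ := hg t₂ ht₀₂
    have h1 : (g t₀)⁻¹ ≤ 1 := inv_le_one_of_one_le₀ hg1
    have h2 : 0 < (g t₂)⁻¹ := inv_pos.mpr (one_pos.trans_le hg2)
    have h3 : c * (t₂ - t₀) = 2 := by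
      rw [ht₂]
      field_simp
      ring
    linarith
  -- Case analysis on a
  rcases a with _ | a
  · -- a = 0, so b ≥ 3
    have hb3 : 3 ≤ b := by omega
    have hw : ∀ t, 0 ≤ t → 1 - ε/2 + ε/2 * f t ^ 4 ≤ deriv f t ^ 2 := by
      intro t ht
      have h := slope_lb (fun y => deriv f y ^ 2 - ε/2 * f y ^ 4) 0 t 0 ht
        (fun x hx => ((hφd x hx.1).pow 2).sub (((hfd x hx.1).pow 4).const_mul (ε/2)))
        ?_
      · have h' : deriv f 0 ^ 2 - ε/2 * f 0 ^ 4 + 0 * (t - 0)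
            ≤ deriv f t ^ 2 - ε/2 * f t ^ 4 := h
        rw [hf'0, hf0] at h'
        nlinarith
      · intro x hx
        have hx0 : (0:ℝ) ≤ x := hx.1.le
        rw [((((hφd x hx0).hasDerivAt).fun_pow 2).fun_sub
          ((((hfd x hx0).hasDerivAt).fun_pow 4).const_mul (ε/2))).deriv]
        have h1 := hode' x hx0
        simp only [pow_zero, mul_one] at h1
        have hφx := hφ1 x hx0
        have hfx := hfge x hx0
        have h2 : f x ^ 3 ≤ f x ^ b := pow_le_pow_right₀ hfx hb3
        push_cast
        simp only [pow_one]
        nlinarith [mul_le_mul_of_nonneg_left h2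
            (mul_nonneg hε.le (by linarith : (0:ℝ) ≤ deriv f x)),
          mul_le_mul_of_nonneg_left h1 (by linarith : (0:ℝ) ≤ 2 * deriv f x)]
    have hcpos : 0 < Real.sqrt ε / 2 := by positivity
    apply key f (Real.sqrt ε / 2) 1 hcpos zero_le_one
    intro t ht
    have ht0 : (0:ℝ) ≤ t := by linarith
    refine ⟨hfd t ht0, by linarith [hf1 t ht0], ?_⟩
    have h1 := hw t ht0
    have h2 : 2 ≤ f t := by linarith [hf1 t ht0]
    have h4 : 16 ≤ f t ^ 4 := by
      have := pow_le_pow_left₀ (by norm_num : (0:ℝ) ≤ 2) h2 4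
      norm_num at this
      linarith
    have h5 : ε/4 * f t ^ 4 ≤ deriv f t ^ 2 := by nlinarith
    have h6 : (Real.sqrt ε / 2 * f t ^ 2) ^ 2 ≤ deriv f t ^ 2 := by
      have he : (Real.sqrt ε / 2 * f t ^ 2) ^ 2 = ε/4 * f t ^ 4 := by
        rw [mul_pow, div_pow, Real.sq_sqrt hε.le]
        ring
      rw [he]; exact h5
    have h7 : 0 ≤ Real.sqrt ε / 2 * f t ^ 2 := by positivity
    have h8 : 0 ≤ deriv f t := by linarith [hφ1 t ht0]
    exact (pow_le_pow_iff_left₀ h7 h8 two_ne_zero).mp h6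
  · rcases a with _ | n
    · -- a = 1, so b ≥ 1
      have hb : b ≠ 0 := by omega
      have hw : ∀ t, 0 ≤ t → 1 - ε/2 + ε/2 * f t ^ 2 ≤ deriv f t := by
        intro t ht
        have h := slope_lb (fun y => deriv f y - ε/2 * f y ^ 2) 0 t 0 ht
          (fun x hx => (hφd x hx.1).sub (((hfd x hx.1).pow 2).const_mul (ε/2)))
          ?_
        · have h' : deriv f 0 - ε/2 * f 0 ^ 2 + 0 * (t - 0)
              ≤ deriv f t - ε/2 * f t ^ 2 := h
          rw [hf'0, hf0] at h'
          nlinarith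
        · intro x hx
          have hx0 : (0:ℝ) ≤ x := hx.1.le
          rw [(((hφd x hx0).hasDerivAt).fun_sub
            ((((hfd x hx0).hasDerivAt).fun_pow 2).const_mul (ε/2))).deriv]
          have h1 := hode' x hx0
          rw [pow_one] at h1
          have hφx := hφ1 x hx0
          have hfx := hfge x hx0
          have h2 : f x ≤ f x ^ b := le_self_pow₀ hfx hb
          have h3 : ε * deriv f x * f x ≤ ε * deriv f x * f x ^ b :=
            mul_le_mul_of_nonneg_left h2 (mul_nonneg hε.le (by linarith))
          push_cast
          simp only [pow_one]
          nlinarith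
      apply key f (ε/4) 1 (by positivity) zero_le_one
      intro t ht
      have ht0 : (0:ℝ) ≤ t := by linarith
      refine ⟨hfd t ht0, by linarith [hf1 t ht0], ?_⟩
      have h1 := hw t ht0
      have h2 : 2 ≤ f t := by linarith [hf1 t ht0]
      have h4 : 4 ≤ f t ^ 2 := by nlinarith
      nlinarith
    · -- a = n + 2
      apply key (deriv f) ε 0 hε le_rfl
      intro t ht
      refine ⟨hφd t ht, hφ1 t ht, ?_⟩
      have h := hode' t ht
      have h4 : 1 ≤ deriv f t ^ n := one_le_pow₀ (hφ1 t ht)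
      have h5 : 1 ≤ f t ^ b := one_le_pow₀ (hfge t ht)
      have e1 : (0:ℝ) ≤ ε * deriv f t ^ 2 := mul_nonneg hε.le (sq_nonneg _)
      have h6 : ε * deriv f t ^ 2 * 1 * 1 ≤ ε * deriv f t ^ 2 * deriv f t ^ n * f t ^ b :=
        mul_le_mul (mul_le_mul_of_nonneg_left h4 e1) h5 zero_le_one
          (mul_nonneg e1 (zero_le_one.trans h4))
      calc ε * deriv f t ^ 2 = ε * deriv f t ^ 2 * 1 * 1 := by ring
        _ ≤ ε * deriv f t ^ 2 * deriv f t ^ n * f t ^ b := h6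
        _ = ε * deriv f t ^ (n + 1 + 1) * f t ^ b := by ring
        _ ≤ deriv (deriv f) t := h
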